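/- arXiv:2505.09146 — 3 statements merged into one kernel-verified Lean document; each statement's English description precedes it below -/
import Mathlib

section
/- Let f, g : ℝ^d → ℝ be differentiable, G-Lipschitz, and L-smooth, let ε > 0, β > 0, and define σ_β(x) = min{1, max{0, 1 + βx}} and F(w) = σ_β(g(w) − ε)∇g(w) + (1 − σ_β(g(w) − ε))∇f(w). Then F is Lipschitz with constant at most 2(L + G²β). -/
theorem soft_switching_field_lipschitz (d : ℕ)
    (f g : EuclideanSpace ℝ (Fin d) → ℝ)
    (f' g' : EuclideanSpace ℝ (Fin d) → EuclideanSpace ℝ (Fin d))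
    (hf : ∀ x, HasGradientAt f (f' x) x)
    (hg : ∀ x, HasGradientAt g (g' x) x)
    (G L ε β : ℝ) (hG : 0 ≤ G) (hL : 0 ≤ L) (hε : 0 < ε) (hβ : 0 < β)
    (hfG : ∀ x, ‖f' x‖ ≤ G) (hgG : ∀ x, ‖g' x‖ ≤ G)
    (hfL : ∀ x y, ‖f' x - f' y‖ ≤ L * ‖x - y‖)
    (hgL : ∀ x y, ‖g' x - g' y‖ ≤ L * ‖x - y‖)
    (σ : ℝ → ℝ) (hσ : σ = fun x => min 1 (max 0 (1 + β * x)))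
    (F : EuclideanSpace ℝ (Fin d) → EuclideanSpace ℝ (Fin d))
    (hF : F = fun w => σ (g w - ε) • g' w + (1 - σ (g w - ε)) • f' w) :
    ∀ x y, ‖F x - F y‖ ≤ 2 * (L + G ^ 2 * β) * ‖x - y‖ := by
  have hσ0 : ∀ a, 0 ≤ σ a := by
    intro a; rw [hσ]; simp [le_min_iff, le_max_iff]
  have hσ1 : ∀ a, σ a ≤ 1 := by
    intro a; rw [hσ]; exact min_le_left _ _
  have hσlip : ∀ a b, |σ a - σ b| ≤ β * |a - b| := by
    intro a b
    rw [hσ]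
    have h1 : |min 1 (max 0 (1 + β * a)) - min 1 (max 0 (1 + β * b))| ≤
        max |(1:ℝ) - 1| |max 0 (1 + β * a) - max 0 (1 + β * b)| :=
      abs_min_sub_min_le_max _ _ _ _
    have h2 : |max (0:ℝ) (1 + β * a) - max 0 (1 + β * b)| ≤ |(1 + β * a) - (1 + β * b)| := by
      rw [max_comm (0:ℝ) (1 + β * a), max_comm (0:ℝ) (1 + β * b)]
      exact abs_max_sub_max_le_abs _ _ _
    have h3 : |(1 + β * a) - (1 + β * b)| = β * |a - b| := by
      rw [show (1 + β * a) - (1 + β * b) = β * (a - b) by ring, abs_mul, abs_of_pos hβ]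
    refine (h1.trans ?_)
    simp only [sub_self, abs_zero]
    rw [max_eq_right (abs_nonneg _)]
    exact h2.trans_eq h3
  have hglip : ∀ a b, |g a - g b| ≤ G * ‖a - b‖ := by
    intro a b
    have := (convex_univ (𝕜 := ℝ)
      (E := EuclideanSpace ℝ (Fin d))).norm_image_sub_le_of_norm_hasFDerivWithin_le
      (f := g) (f' := fun w => (InnerProductSpace.toDual ℝ _) (g' w)) (C := G)
      (fun w _ => (hg w).hasFDerivAt.hasFDerivWithinAt)
      (fun w _ => by simpa using hgG w) (Set.mem_univ b) (Set.mem_univ a)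
    simpa [Real.norm_eq_abs] using this
  intro x y
  have key : F x - F y = σ (g x - ε) • (g' x - g' y) + (1 - σ (g x - ε)) • (f' x - f' y)
      + (σ (g x - ε) - σ (g y - ε)) • (g' y - f' y) := by
    rw [hF]; simp only; module
  have hsd : |σ (g x - ε) - σ (g y - ε)| ≤ β * G * ‖x - y‖ := by
    have h1 := hσlip (g x - ε) (g y - ε)
    have h2 : |(g x - ε) - (g y - ε)| = |g x - g y| := by ring_nf
    calc |σ (g x - ε) - σ (g y - ε)| ≤ β * |g x - g y| := by rw [h2] at h1; exact h1
      _ ≤ β * (G * ‖x - y‖) := by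
          exact mul_le_mul_of_nonneg_left (hglip x y) hβ.le
      _ = β * G * ‖x - y‖ := by ring
  have hgfy : ‖g' y - f' y‖ ≤ 2 * G := by
    calc ‖g' y - f' y‖ ≤ ‖g' y‖ + ‖f' y‖ := norm_sub_le _ _
      _ ≤ G + G := add_le_add (hgG y) (hfG y)
      _ = 2 * G := by ring
  have hs0 := hσ0 (g x - ε); have hs1 := hσ1 (g x - ε)
  calc ‖F x - F y‖ ≤ σ (g x - ε) * ‖g' x - g' y‖ + (1 - σ (g x - ε)) * ‖f' x - f' y‖
        + |σ (g x - ε) - σ (g y - ε)| * ‖g' y - f' y‖ := by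
        rw [key]
        refine (norm_add_le _ _).trans ?_
        refine le_trans (add_le_add_left (norm_add_le _ _) _) (le_of_eq ?_)
        rw [norm_smul, norm_smul, norm_smul, Real.norm_eq_abs, Real.norm_eq_abs,
          Real.norm_eq_abs, abs_of_nonneg hs0, abs_of_nonneg (by linarith : (0:ℝ) ≤ 1 - σ (g x - ε))]
    _ ≤ σ (g x - ε) * (L * ‖x - y‖) + (1 - σ (g x - ε)) * (L * ‖x - y‖)
        + (β * G * ‖x - y‖) * (2 * G) := by
        refine add_le_add (add_le_add ?_ ?_) ?_
        · exact mul_le_mul_of_nonneg_left (hgL x y) hs0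
        · exact mul_le_mul_of_nonneg_left (hfL x y) (by linarith)
        · exact mul_le_mul hsd hgfy (norm_nonneg _)
            (by positivity)
    _ = (L + 2 * G ^ 2 * β) * ‖x - y‖ := by ring
    _ ≤ 2 * (L + G ^ 2 * β) * ‖x - y‖ := by
        have := norm_nonneg (x - y); nlinarith [sq_nonneg G]
end

section
/- Let f, g : ℝ^d → ℝ be convex, differentiable, G-Lipschitz functions, w* a minimizer of f subject to g(w) ≤ 0 with g(w*) ≤ 0, D = ‖w_1 − w*‖. Run the Switching Gradient Method w_{t+1} = w_t − η u_t, where u_t = ∇f(w_t) if g(w_t) ≤ ε else u_t = ∇g(w_t), with ε = DG/√T and η = D/(G√T). Then the set A = {t ∈ [T] : g(w_t) ≤ ε} is nonempty, and w̄ := (1/|A|) Σ_{t∈A} w_t satisfies f(w̄) − f(w*) ≤ ε and g(w̄) ≤ ε. -/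
open RealInnerProductSpace Finset
open scoped Classical

set_option maxHeartbeats 1000000

lemma first_order_aux {E : Type*} [NormedAddCommGroup E] [InnerProductSpace ℝ E]
    [CompleteSpace E] {f : E → ℝ} {p x : E} (hconv : ConvexOn ℝ Set.univ f)
    (hf : HasGradientAt f p x) (y : E) :
    f x + ⟪p, y - x⟫ ≤ f y := by
  have hφconv : ConvexOn ℝ Set.univ (f ∘ (AffineMap.lineMap x y : ℝ →ᵃ[ℝ] E)) := by
    have := hconv.comp_affineMap (AffineMap.lineMap x y)
    rwa [Set.preimage_univ] at this
  have hcurve : HasDerivAt (fun t : ℝ => (AffineMap.lineMap x y : ℝ →ᵃ[ℝ] E) t) (y - x) 0 := by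
    simp only [AffineMap.coe_lineMap]
    simpa using ((hasDerivAt_id (0:ℝ)).smul_const (y - x)).add_const x
  have hx0 : (AffineMap.lineMap x y : ℝ →ᵃ[ℝ] E) 0 = x := by simp
  have hderiv : HasDerivAt (f ∘ (AffineMap.lineMap x y : ℝ →ᵃ[ℝ] E)) ⟪p, y - x⟫ 0 := by
    have hF := hf.hasFDerivAt
    rw [← hx0] at hF
    have h1 := hF.comp_hasDerivAt (0:ℝ) hcurve
    simpa using h1
  have hle := hφconv.le_slope_of_hasDerivAt (Set.mem_univ (0:ℝ)) (Set.mem_univ (1:ℝ))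
    one_pos hderiv
  have hs : slope (f ∘ (AffineMap.lineMap x y : ℝ →ᵃ[ℝ] E)) 0 1 = f y - f x := by
    simp [slope, hx0]
  rw [hs] at hle
  linarith

theorem sgm_nonsmooth_convergence (d : ℕ) (T : ℕ) (hT : 1 ≤ T)
    (f g : EuclideanSpace ℝ (Fin d) → ℝ)
    (f' g' : EuclideanSpace ℝ (Fin d) → EuclideanSpace ℝ (Fin d))
    (hfconv : ConvexOn ℝ Set.univ f) (hgconv : ConvexOn ℝ Set.univ g)
    (hf : ∀ x, HasGradientAt f (f' x) x)
    (hg : ∀ x, HasGradientAt g (g' x) x)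
    (G : ℝ) (hG : 0 < G)
    (hfG : ∀ x, ‖f' x‖ ≤ G) (hgG : ∀ x, ‖g' x‖ ≤ G)
    (wstar : EuclideanSpace ℝ (Fin d)) (hws : g wstar ≤ 0)
    (hmin : ∀ x, g x ≤ 0 → f wstar ≤ f x)
    (w u : ℕ → EuclideanSpace ℝ (Fin d))
    (D : ℝ) (hD : D = ‖w 1 - wstar‖)
    (ε η : ℝ) (hε : ε = D * G / Real.sqrt T) (hη : η = D / (G * Real.sqrt T))
    (hu : ∀ t, u t = if g (w t) ≤ ε then f' (w t) else g' (w t))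
    (hupd : ∀ t, w (t + 1) = w t - η • u t)
    (A : Finset ℕ)
    (hA : A = (Finset.Icc 1 T).filter (fun t => g (w t) ≤ ε))
    (wbar : EuclideanSpace ℝ (Fin d))
    (hwbar : wbar = (A.card : ℝ)⁻¹ • ∑ t ∈ A, w t) :
    A.Nonempty ∧ f wbar - f wstar ≤ ε ∧ g wbar ≤ ε := by
  have hTpos : (0:ℝ) < (T:ℝ) := by exact_mod_cast hT
  have hsq : (0:ℝ) < Real.sqrt T := Real.sqrt_pos.2 hTpos
  have hsqT : Real.sqrt T * Real.sqrt T = (T:ℝ) := Real.mul_self_sqrt hTpos.le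
  have hDnn : 0 ≤ D := hD ▸ norm_nonneg _
  rcases eq_or_lt_of_le hDnn with hD0 | hDpos
  · -- degenerate case D = 0
    have hw1 : w 1 = wstar := by
      have h0 : ‖w 1 - wstar‖ = 0 := by rw [← hD, ← hD0]
      rwa [norm_eq_zero, sub_eq_zero] at h0
    have hε0 : ε = 0 := by rw [hε, ← hD0]; simp
    have hη0 : η = 0 := by rw [hη, ← hD0]; simp
    have hwt' : ∀ n, w (n + 1) = w 1 := by
      intro n
      induction n with
      | zero => rfl
      | succ m ih => rw [hupd (m+1), hη0, zero_smul, sub_zero, ih]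
    have hwt : ∀ t, 1 ≤ t → w t = wstar := by
      intro t ht
      obtain ⟨n, rfl⟩ := Nat.exists_eq_add_of_le ht
      rw [Nat.add_comm, hwt', hw1]
    have hAeq : A = Finset.Icc 1 T := by
      rw [hA]
      apply Finset.filter_true_of_mem
      intro t ht
      rw [hwt t (Finset.mem_Icc.1 ht).1, hε0]
      exact hws
    have hAne : A.Nonempty := by
      rw [hAeq]
      exact ⟨1, Finset.mem_Icc.2 ⟨le_refl 1, hT⟩⟩
    have hcard : A.card = T := by rw [hAeq, Nat.card_Icc]; omega
    have hcardne : (A.card : ℝ) ≠ 0 := by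
      rw [hcard]; exact ne_of_gt hTpos
    have hwbareq : wbar = wstar := by
      rw [hwbar]
      have hsum : ∑ t ∈ A, w t = (A.card : ℕ) • wstar := by
        rw [← Finset.sum_const]
        apply Finset.sum_congr rfl
        intro t ht
        rw [hAeq] at ht
        exact hwt t (Finset.mem_Icc.1 ht).1
      rw [hsum, ← Nat.cast_smul_eq_nsmul (R := ℝ), smul_smul, inv_mul_cancel₀ hcardne, one_smul]
    refine ⟨hAne, ?_, ?_⟩
    · rw [hwbareq, hε0]; simp
    · rw [hwbareq, hε0]; exact hws
  · -- main case D > 0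
    have hGne : G ≠ 0 := ne_of_gt hG
    have hsne : Real.sqrt T ≠ 0 := ne_of_gt hsq
    have hηpos : 0 < η := by rw [hη]; positivity
    have hεpos : 0 < ε := by rw [hε]; positivity
    have h1key : η * (G * Real.sqrt T) = D := by rw [hη]; field_simp
    have h2key : ε * Real.sqrt T = D * G := by rw [hε]; field_simp
    have hηG : η^2 * G^2 * T = D^2 := by
      rw [← hsqT]; linear_combination (η*G*Real.sqrt T + D) * h1key
    have hηTε : η * T * ε = D^2 := by
      have h3 : G * (η * (T:ℝ) * ε) = G * D^2 := by
        rw [← hsqT]; linear_combination (ε*Real.sqrt T) * h1key + D * h2key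
      exact mul_left_cancel₀ hGne h3
    -- per-step descent
    have hstep : ∀ t, 2*η*⟪u t, w t - wstar⟫ + ‖w (t+1) - wstar‖^2
        ≤ ‖w t - wstar‖^2 + η^2*G^2 := by
      intro t
      have hexp : w (t+1) - wstar = (w t - wstar) - η • u t := by
        rw [hupd t]; abel
      have hid : ‖(w t - wstar) - η • u t‖^2
          = ‖w t - wstar‖^2 - 2*(η*⟪w t - wstar, u t⟫) + η^2*‖u t‖^2 := by
        rw [norm_sub_sq_real, real_inner_smul_right, norm_smul]
        rw [Real.norm_eq_abs, abs_of_pos hηpos]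
        ring
      have huG : ‖u t‖ ≤ G := by
        rw [hu t]; split_ifs
        · exact hfG _
        · exact hgG _
      have h2 : ‖u t‖^2 ≤ G^2 := by nlinarith [norm_nonneg (u t)]
      have hsym : ⟪w t - wstar, u t⟫ = ⟪u t, w t - wstar⟫ := real_inner_comm _ _
      rw [hexp, hid, hsym]
      nlinarith [sq_nonneg η]
    -- summed descent
    have hsum : ∀ n : ℕ, 2*η*(∑ t ∈ Finset.Icc 1 n, ⟪u t, w t - wstar⟫)
        + ‖w (n+1) - wstar‖^2 ≤ D^2 + n*(η^2*G^2) := by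
      intro n
      induction n with
      | zero =>
        have he : Finset.Icc 1 0 = (∅ : Finset ℕ) := by simp
        rw [he, Finset.sum_empty, hD]
        simp
      | succ n ih =>
        rw [Finset.sum_Icc_succ_top (by omega : 1 ≤ n+1)]
        have hs := hstep (n+1)
        have hdist : 2*η*((∑ t ∈ Finset.Icc 1 n, ⟪u t, w t - wstar⟫)
            + ⟪u (n+1), w (n+1) - wstar⟫)
            = 2*η*(∑ t ∈ Finset.Icc 1 n, ⟪u t, w t - wstar⟫)
            + 2*η*⟪u (n+1), w (n+1) - wstar⟫ := by ring
        rw [hdist]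
        push_cast
        linarith
    have hmain : 2*η*(∑ t ∈ Finset.Icc 1 T, ⟪u t, w t - wstar⟫) ≤ 2*D^2 := by
      have h1 := hsum T
      linarith [sq_nonneg ‖w (T+1) - wstar‖, hηG]
    -- per-term lower bounds
    have hlow : ∀ t, ε < g (w t) → ε < ⟪u t, w t - wstar⟫ := by
      intro t ht
      have hut : u t = g' (w t) := by rw [hu t, if_neg (not_le.2 ht)]
      have hfo := first_order_aux hgconv (hg (w t)) wstar
      have hneg : ⟪g' (w t), wstar - w t⟫ = -⟪g' (w t), w t - wstar⟫ := by
        rw [← inner_neg_right, neg_sub]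
      rw [hneg] at hfo
      rw [hut]
      linarith
    have hlowf : ∀ t, g (w t) ≤ ε → f (w t) - f wstar ≤ ⟪u t, w t - wstar⟫ := by
      intro t ht
      have hut : u t = f' (w t) := by rw [hu t, if_pos ht]
      have hfo := first_order_aux hfconv (hf (w t)) wstar
      have hneg : ⟪f' (w t), wstar - w t⟫ = -⟪f' (w t), w t - wstar⟫ := by
        rw [← inner_neg_right, neg_sub]
      rw [hneg] at hfo
      rw [hut]
      linarith
    -- nonemptiness
    have hAne : A.Nonempty := by
      by_contra hemp
      rw [Finset.not_nonempty_iff_eq_empty, hA, Finset.filter_eq_empty_iff] at hemp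
      have hIne : (Finset.Icc 1 T).Nonempty := ⟨1, Finset.mem_Icc.2 ⟨le_refl 1, hT⟩⟩
      have hstrict := Finset.sum_lt_sum_of_nonempty hIne
        (fun t ht => hlow t (not_le.1 (hemp ht)))
      have hcards : ∑ _t ∈ Finset.Icc 1 T, ε = (T:ℝ) * ε := by
        rw [Finset.sum_const, Nat.card_Icc]
        have h10 : T + 1 - 1 = T := by omega
        rw [h10, nsmul_eq_mul]
      rw [hcards] at hstrict
      have h1 : 2*η*((T:ℝ)*ε) < 2*η*(∑ t ∈ Finset.Icc 1 T, ⟪u t, w t - wstar⟫) :=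
        mul_lt_mul_of_pos_left hstrict (by positivity)
      have h2 : 2*η*((T:ℝ)*ε) = 2*D^2 := by rw [← hηTε]; ring
      linarith
    have hkpos : 0 < A.card := Finset.card_pos.2 hAne
    have hkRpos : (0:ℝ) < (A.card : ℝ) := by exact_mod_cast hkpos
    -- split the sum
    set B := (Finset.Icc 1 T).filter (fun t => ¬ g (w t) ≤ ε) with hB
    have hsplit : (∑ t ∈ A, ⟪u t, w t - wstar⟫) + (∑ t ∈ B, ⟪u t, w t - wstar⟫)
        = ∑ t ∈ Finset.Icc 1 T, ⟪u t, w t - wstar⟫ := by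
      rw [hA, hB]
      exact Finset.sum_filter_add_sum_filter_not _ _ _
    have hcardAB : A.card + B.card = T := by
      rw [hA, hB, Finset.card_filter_add_card_filter_not, Nat.card_Icc]
      omega
    have hBcard : (B.card : ℝ) = (T:ℝ) - (A.card : ℝ) := by
      have := hcardAB
      push_cast [← this]
      ring
    have hBlow : ((T:ℝ) - (A.card:ℝ)) * ε ≤ ∑ t ∈ B, ⟪u t, w t - wstar⟫ := by
      rw [← hBcard]
      calc (B.card : ℝ) * ε = ∑ _t ∈ B, ε := by rw [Finset.sum_const, nsmul_eq_mul]
        _ ≤ ∑ t ∈ B, ⟪u t, w t - wstar⟫ := by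
            apply Finset.sum_le_sum
            intro t ht
            rw [hB, Finset.mem_filter] at ht
            exact (hlow t (not_le.1 ht.2)).le
    have hAmem : ∀ t ∈ A, g (w t) ≤ ε := by
      intro t ht
      rw [hA, Finset.mem_filter] at ht
      exact ht.2
    have hAlow : ∑ t ∈ A, (f (w t) - f wstar) ≤ ∑ t ∈ A, ⟪u t, w t - wstar⟫ :=
      Finset.sum_le_sum fun t ht => hlowf t (hAmem t ht)
    -- key bound: sum over A of f-gaps ≤ |A| ε
    have hfsum : ∑ t ∈ A, (f (w t) - f wstar) ≤ (A.card : ℝ) * ε := by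
      have hX : (∑ t ∈ A, (f (w t) - f wstar)) + ((T:ℝ) - (A.card:ℝ)) * ε
          ≤ ∑ t ∈ Finset.Icc 1 T, ⟪u t, w t - wstar⟫ := by
        rw [← hsplit]
        exact add_le_add hAlow hBlow
      have h2 : 2*η*((∑ t ∈ A, (f (w t) - f wstar)) + ((T:ℝ) - (A.card:ℝ)) * ε)
          ≤ 2*D^2 := by
        have := mul_le_mul_of_nonneg_left hX (by positivity : (0:ℝ) ≤ 2*η)
        linarith
      have h3 : 2*D^2 = 2*η*((T:ℝ)*ε) := by rw [← hηTε]; ring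
      rw [h3] at h2
      have h4 := le_of_mul_le_mul_left (by linarith [h2] :
        (2*η)*((∑ t ∈ A, (f (w t) - f wstar)) + ((T:ℝ) - (A.card:ℝ)) * ε)
          ≤ (2*η)*((T:ℝ)*ε)) (by positivity : (0:ℝ) < 2*η)
      linarith
    -- Jensen
    have hwbar' : wbar = ∑ t ∈ A, ((A.card:ℝ))⁻¹ • w t := by
      rw [hwbar, Finset.smul_sum]
    have hwsum : ∑ _t ∈ A, ((A.card:ℝ))⁻¹ = 1 := by
      rw [Finset.sum_const, nsmul_eq_mul]
      exact mul_inv_cancel₀ hkRpos.ne'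
    have hjf : f wbar ≤ ∑ t ∈ A, ((A.card:ℝ))⁻¹ * f (w t) := by
      rw [hwbar']
      exact hfconv.map_sum_le (fun i _ => inv_nonneg.2 hkRpos.le) hwsum (fun i _ => Set.mem_univ _)
    have hjg : g wbar ≤ ∑ t ∈ A, ((A.card:ℝ))⁻¹ * g (w t) := by
      rw [hwbar']
      exact hgconv.map_sum_le (fun i _ => inv_nonneg.2 hkRpos.le) hwsum (fun i _ => Set.mem_univ _)
    refine ⟨hAne, ?_, ?_⟩
    · -- f bound
      have hsub : ∑ t ∈ A, (f (w t) - f wstar)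
          = (∑ t ∈ A, f (w t)) - (A.card : ℝ) * f wstar := by
        rw [Finset.sum_sub_distrib, Finset.sum_const, nsmul_eq_mul]
      have hfs : ∑ t ∈ A, f (w t) ≤ (A.card : ℝ) * ε + (A.card : ℝ) * f wstar := by
        rw [hsub] at hfsum; linarith
      have : ∑ t ∈ A, ((A.card:ℝ))⁻¹ * f (w t)
          = ((A.card:ℝ))⁻¹ * ∑ t ∈ A, f (w t) := by
        rw [Finset.mul_sum]
      rw [this] at hjf
      have h5 : ((A.card:ℝ))⁻¹ * ∑ t ∈ A, f (w t)
          ≤ ((A.card:ℝ))⁻¹ * ((A.card : ℝ) * ε + (A.card : ℝ) * f wstar) :=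
        mul_le_mul_of_nonneg_left hfs (inv_nonneg.2 hkRpos.le)
      have h6 : ((A.card:ℝ))⁻¹ * ((A.card : ℝ) * ε + (A.card : ℝ) * f wstar)
          = ε + f wstar := by rw [mul_add, ← mul_assoc, ← mul_assoc, inv_mul_cancel₀ hkRpos.ne', one_mul, one_mul]
      linarith
    · -- g bound
      have hgs : ∑ t ∈ A, ((A.card:ℝ))⁻¹ * g (w t)
          ≤ ∑ _t ∈ A, ((A.card:ℝ))⁻¹ * ε := by
        apply Finset.sum_le_sum
        intro t ht
        exact mul_le_mul_of_nonneg_left (hAmem t ht) (inv_nonneg.2 hkRpos.le)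
      have : ∑ _t ∈ A, ((A.card:ℝ))⁻¹ * ε = ε := by
        rw [Finset.sum_const, nsmul_eq_mul]
        rw [← mul_assoc, mul_inv_cancel₀ hkRpos.ne', one_mul]
      linarith
end

section
/- Let f, g : ℝ^d → ℝ be convex, differentiable functions with σ_β(x) = min{1, max{0, 1+βx}}, ε > 0, β > 0, and F(w) = σ_β(g(w)−ε)∇g(w) + (1−σ_β(g(w)−ε))∇f(w). Let w* satisfy g(w*) ≤ 0. Then for any w with g(w) ≥ ε, ⟨F(w), w − w*⟩ ≥ g(w) − g(w*) ≥ ε, and for any w with g(w) < ε, ⟨F(w), w − w*⟩ ≥ σ_β(g(w)−ε)(ε − 1/β) + (1−σ_β(g(w)−ε))(f(w) − f(w*)). -/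
open RealInnerProductSpace

lemma grad_ineq_aux {d : ℕ} {f : EuclideanSpace ℝ (Fin d) → ℝ}
    {v : EuclideanSpace ℝ (Fin d)} (hconv : ConvexOn ℝ Set.univ f)
    (w y : EuclideanSpace ℝ (Fin d)) (hf : HasGradientAt f v w) :
    f w - f y ≤ ⟪v, w - y⟫ := by
  have hline : HasDerivAt (fun t : ℝ => w + t • (y - w)) (y - w) 0 := by
    simpa using ((hasDerivAt_id (0:ℝ)).smul_const (y - w)).const_add w
  have hphi : HasDerivAt (fun t : ℝ => f (w + t • (y - w))) ⟪v, y - w⟫ 0 := by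
    have hfd : HasFDerivAt f ((InnerProductSpace.toDual ℝ (EuclideanSpace ℝ (Fin d))) v)
        (w + (0:ℝ) • (y - w)) := by simpa using hf.hasFDerivAt
    exact (hfd.comp_hasDerivAt 0 hline).congr_deriv (by simp)
  have hslope : Filter.Tendsto (slope (fun t : ℝ => f (w + t • (y - w))) 0)
      (nhdsWithin 0 (Set.Ioi 0)) (nhds ⟪v, y - w⟫) :=
    (hasDerivAt_iff_tendsto_slope.1 hphi).mono_left
      (nhdsWithin_mono _ (by intro t ht; exact ne_of_gt ht))
  have hbound : ⟪v, y - w⟫ ≤ f y - f w := by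
    refine le_of_tendsto hslope ?_
    filter_upwards [Ioc_mem_nhdsGT_of_mem (by norm_num : (0:ℝ) ∈ Set.Ico 0 1)] with t ht
    obtain ⟨ht0, ht1⟩ := ht
    have hcvx := hconv.2 (Set.mem_univ w) (Set.mem_univ y)
      (by linarith : (0:ℝ) ≤ 1 - t) (le_of_lt ht0) (by ring)
    have heq : w + t • (y - w) = (1 - t) • w + t • y := by
      module
    have hle : f (w + t • (y - w)) ≤ (1 - t) * f w + t * f y := by
      rw [heq]; simpa using hcvx
    simp only [slope_def_field, zero_smul, add_zero, sub_zero]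
    rw [div_le_iff₀ ht0]
    nlinarith
  have : ⟪v, w - y⟫ = -⟪v, y - w⟫ := by
    rw [← inner_neg_right]; congr 1; abel
  linarith [this]

theorem soft_switching_inner_bounds (d : ℕ)
    (f g : EuclideanSpace ℝ (Fin d) → ℝ)
    (f' g' : EuclideanSpace ℝ (Fin d) → EuclideanSpace ℝ (Fin d))
    (hfconv : ConvexOn ℝ Set.univ f) (hgconv : ConvexOn ℝ Set.univ g)
    (hf : ∀ x, HasGradientAt f (f' x) x)
    (hg : ∀ x, HasGradientAt g (g' x) x)
    (ε β : ℝ) (hε : 0 < ε) (hβ : 0 < β)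
    (σ : ℝ → ℝ) (hσ : σ = fun x => min 1 (max 0 (1 + β * x)))
    (F : EuclideanSpace ℝ (Fin d) → EuclideanSpace ℝ (Fin d))
    (hF : F = fun w => σ (g w - ε) • g' w + (1 - σ (g w - ε)) • f' w)
    (wstar : EuclideanSpace ℝ (Fin d)) (hws : g wstar ≤ 0) :
    (∀ w, ε ≤ g w → g w - g wstar ≤ ⟪F w, w - wstar⟫ ∧ ε ≤ g w - g wstar) ∧
    (∀ w, g w < ε →
      σ (g w - ε) * (ε - 1 / β) + (1 - σ (g w - ε)) * (f w - f wstar) ≤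
        ⟪F w, w - wstar⟫) := by
  have hFinner : ∀ w, ⟪F w, w - wstar⟫ =
      σ (g w - ε) * ⟪g' w, w - wstar⟫ + (1 - σ (g w - ε)) * ⟪f' w, w - wstar⟫ := by
    intro w
    rw [hF]
    show ⟪σ (g w - ε) • g' w + (1 - σ (g w - ε)) • f' w, w - wstar⟫ = _
    rw [inner_add_left, real_inner_smul_left, real_inner_smul_left]
  have hgi : ∀ w, g w - g wstar ≤ ⟪g' w, w - wstar⟫ := fun w =>
    grad_ineq_aux hgconv w wstar (hg w)
  have hfi : ∀ w, f w - f wstar ≤ ⟪f' w, w - wstar⟫ := fun w =>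
    grad_ineq_aux hfconv w wstar (hf w)
  have hσ01 : ∀ x, 0 ≤ σ x ∧ σ x ≤ 1 := by
    intro x; rw [hσ]; constructor
    · exact le_min (by norm_num) (le_max_left _ _)
    · exact min_le_left _ _
  constructor
  · intro w hw
    have hσ1 : σ (g w - ε) = 1 := by
      rw [hσ]
      have h1 : 1 ≤ 1 + β * (g w - ε) := by nlinarith
      simp only []
      rw [max_eq_right (by linarith), min_eq_left h1]
    constructor
    · rw [hFinner w, hσ1]
      simpa using hgi w
    · linarith
  · intro w _
    have h0 := (hσ01 (g w - ε)).1
    have h1 := (hσ01 (g w - ε)).2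
    rw [hFinner w]
    have hA : σ (g w - ε) * (ε - 1 / β) ≤ σ (g w - ε) * ⟪g' w, w - wstar⟫ := by
      rcases eq_or_lt_of_le h0 with h | h
      · rw [← h]; simp
      · have hx : ε - 1/β < g w := by
          have : 0 < max 0 (1 + β * (g w - ε)) := by
            by_contra hc
            push_neg at hc
            rw [hσ] at h
            simp only [] at h
            have := min_le_right (1:ℝ) (max 0 (1 + β * (g w - ε)))
            linarith
          have h2 : 0 < 1 + β * (g w - ε) := by
            rcases max_cases (0:ℝ) (1 + β * (g w - ε)) with ⟨he, _⟩ | ⟨he, _⟩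
            · linarith
            · linarith [he ▸ this]
          have h3 : β * (ε - 1/β) < β * g w := by
            rw [mul_sub, mul_one_div, div_self (ne_of_gt hβ)]
            nlinarith
          exact lt_of_mul_lt_mul_left h3 (le_of_lt hβ)
        calc σ (g w - ε) * (ε - 1 / β) ≤ σ (g w - ε) * (g w - g wstar) := by
              apply mul_le_mul_of_nonneg_left _ h0
              linarith
          _ ≤ σ (g w - ε) * ⟪g' w, w - wstar⟫ :=
              mul_le_mul_of_nonneg_left (hgi w) h0
    have hB : (1 - σ (g w - ε)) * (f w - f wstar) ≤
        (1 - σ (g w - ε)) * ⟪f' w, w - wstar⟫ :=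
      mul_le_mul_of_nonneg_left (hfi w) (by linarith)
    linarith
end
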